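/- Fix ε̃ > 0 and λ⁰ > 0. Let λ : [0,∞) → ℝ solve λ'(t) = −4 λ(t)² / (√(λ(t)² + ε̃²) + ε̃) with λ(0) = λ⁰. Then for all t ≥ 0, 0 ≤ λ(t) ≤ λ⁰ / (1 + λ⁰ C t), where C = 4/(√((λ⁰)² + ε̃²) + ε̃). -/

import Mathlib

open Set


/-- sublinear convergence rate for the eigenvalue ODE with zero target. -/
theorem stmt9 (ε l0 : ℝ) (hε : 0 < ε) (hl0 : 0 < l0)
    (l : ℝ → ℝ)
    (hode : ∀ t ≥ (0 : ℝ), HasDerivAt l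
      (-(4 * (l t) ^ 2 / (Real.sqrt ((l t) ^ 2 + ε ^ 2) + ε))) t)
    (hinit : l 0 = l0) :
    ∀ t ≥ (0 : ℝ),
      0 ≤ l t ∧ l t ≤ l0 / (1 + l0 * (4 / (Real.sqrt (l0 ^ 2 + ε ^ 2) + ε)) * t) := by
  set F : ℝ → ℝ := fun x => -(4 * x ^ 2 / (Real.sqrt (x ^ 2 + ε ^ 2) + ε)) with hF
  have hsqpos : ∀ x : ℝ, 0 < Real.sqrt (x ^ 2 + ε ^ 2) + ε := by
    intro x; positivity
  have hsqsq : ∀ x : ℝ, Real.sqrt (x ^ 2 + ε ^ 2) ^ 2 = x ^ 2 + ε ^ 2 := by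
    intro x; exact Real.sq_sqrt (by positivity)
  have hFid : ∀ x : ℝ, F x = -4 * (Real.sqrt (x ^ 2 + ε ^ 2) - ε) := by
    intro x
    have hd := (hsqpos x).ne'
    have hs := hsqsq x
    rw [hF]
    field_simp
    nlinarith [hs]
  have key : ∀ x y : ℝ, Real.sqrt (x ^ 2 + ε ^ 2) ≤ Real.sqrt (y ^ 2 + ε ^ 2) + |x - y| := by
    intro x y
    have hy : |y| ≤ Real.sqrt (y ^ 2 + ε ^ 2) := by
      rw [← Real.sqrt_sq_eq_abs]
      exact Real.sqrt_le_sqrt (by nlinarith [sq_nonneg ε])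
    have h1 : x ^ 2 + ε ^ 2 ≤ (Real.sqrt (y ^ 2 + ε ^ 2) + |x - y|) ^ 2 := by
      have hs := hsqsq y
      nlinarith [abs_nonneg (x - y), abs_sub_abs_le_abs_sub x y, sq_abs y, sq_abs x,
        abs_nonneg y, abs_nonneg x, mul_le_mul_of_nonneg_right hy (abs_nonneg (x - y)),
        sq_abs (x - y)]
    calc Real.sqrt (x ^ 2 + ε ^ 2)
        ≤ Real.sqrt ((Real.sqrt (y ^ 2 + ε ^ 2) + |x - y|) ^ 2) := Real.sqrt_le_sqrt h1
      _ = _ := Real.sqrt_sq (by positivity)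
  have hlip : LipschitzWith 4 F := by
    apply LipschitzWith.of_dist_le_mul
    intro x y
    rw [Real.dist_eq, Real.dist_eq, hFid x, hFid y]
    have h1 := key x y
    have h2 := key y x
    rw [abs_sub_comm y x] at h2
    have habs : |Real.sqrt (x ^ 2 + ε ^ 2) - Real.sqrt (y ^ 2 + ε ^ 2)| ≤ |x - y| :=
      abs_sub_le_iff.mpr ⟨by linarith, by linarith⟩
    have heq : -4 * (Real.sqrt (x ^ 2 + ε ^ 2) - ε) - -4 * (Real.sqrt (y ^ 2 + ε ^ 2) - ε)
        = (-4) * (Real.sqrt (x ^ 2 + ε ^ 2) - Real.sqrt (y ^ 2 + ε ^ 2)) := by ring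
    rw [heq, abs_mul]
    push_cast
    norm_num
    nlinarith [habs, abs_nonneg (x - y)]
  have hF0 : F 0 = 0 := by simp [hF]
  have hcont : ∀ a b : ℝ, 0 ≤ a → ContinuousOn l (Icc a b) := by
    intro a b ha x hx
    exact (hode x (le_trans ha hx.1)).continuousAt.continuousWithinAt
  -- uniqueness: once zero, always zero
  have huniq : ∀ s t : ℝ, 0 ≤ s → s ≤ t → l s = 0 → l t = 0 := by
    intro s t hs hst hls
    have := ODE_solution_unique (v := fun _ x => F x) (K := 4) (f := l) (g := fun _ => 0)
      (a := s) (b := t) (fun _ => hlip) (hcont s t hs)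
      (fun r hr => (hode r (le_trans hs hr.1)).hasDerivWithinAt)
      (continuousOn_const)
      (fun r hr => by simpa [hF0] using (hasDerivWithinAt_const r (Ici r) (0:ℝ)))
      (by simpa using hls)
    simpa using this ⟨hst, le_rfl⟩
  have hFnp : ∀ x : ℝ, F x ≤ 0 := by
    intro x
    rw [hF]
    simp only [neg_nonpos]
    exact div_nonneg (by positivity) (hsqpos x).le
  have hnonneg : ∀ t ≥ (0:ℝ), 0 ≤ l t := by
    intro t ht
    by_contra h
    push_neg at h
    have hmem : (0:ℝ) ∈ Icc (l t) (l 0) := ⟨h.le, by rw [hinit]; exact hl0.le⟩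
    obtain ⟨s, hs, hls⟩ := intermediate_value_Icc' ht (hcont 0 t le_rfl) hmem
    exact absurd (huniq s t hs.1 hs.2 hls) h.ne
  have hmono : ∀ s t : ℝ, 0 ≤ s → s ≤ t → l t ≤ l s := by
    intro s t hs hst
    rcases eq_or_lt_of_le hst with rfl | hlt
    · exact le_rfl
    obtain ⟨c, hc, hceq⟩ := exists_hasDerivAt_eq_slope l (fun x => F (l x)) hlt
      (hcont s t hs) (fun x hx => hode x (le_trans hs hx.1.le))
    have h1 := hFnp (l c)
    rw [hceq] at h1
    have h2 := (div_le_iff₀ (by linarith : (0:ℝ) < t - s)).mp h1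
    linarith
  intro t ht
  refine ⟨hnonneg t ht, ?_⟩
  set C : ℝ := 4 / (Real.sqrt (l0 ^ 2 + ε ^ 2) + ε) with hC
  have hCpos : 0 < C := by rw [hC]; positivity
  have hden : 0 < 1 + l0 * C * t := by
    have : 0 ≤ l0 * C * t := mul_nonneg (by positivity) ht
    linarith
  rcases eq_or_lt_of_le ht with heq | htpos
  · rw [← heq]
    simp [hinit]
  rcases le_or_gt (l t) 0 with hle | hpos
  · have h0 : l t = 0 := le_antisymm hle (hnonneg t ht)
    rw [h0]
    positivity
  -- l positive on [0,t]
  have hpos_all : ∀ s ∈ Icc (0:ℝ) t, 0 < l s := by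
    intro s hs
    rcases lt_or_ge 0 (l s) with h | h
    · exact h
    · exfalso
      have : l s = 0 := le_antisymm h (hnonneg s hs.1)
      exact absurd (huniq s t hs.1 hs.2 this) hpos.ne'
  have hle_l0 : ∀ s ∈ Icc (0:ℝ) t, l s ≤ l0 := by
    intro s hs
    rw [← hinit]
    exact hmono 0 s le_rfl hs.1
  set u : ℝ → ℝ := fun s => (l s)⁻¹ with hu
  have hud : ∀ s ∈ Icc (0:ℝ) t, HasDerivAt u (-(F (l s)) / (l s) ^ 2) s := by
    intro s hs
    exact (hode s hs.1).inv (hpos_all s hs).ne'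
  have hubound : ∀ s ∈ Icc (0:ℝ) t, C ≤ -(F (l s)) / (l s) ^ 2 := by
    intro s hs
    have hls := hpos_all s hs
    have h1 : -(F (l s)) / (l s) ^ 2 = 4 / (Real.sqrt ((l s) ^ 2 + ε ^ 2) + ε) := by
      rw [hF]
      field_simp
    rw [h1, hC]
    gcongr
    exact hle_l0 s hs
  obtain ⟨c, hc, hceq⟩ := exists_hasDerivAt_eq_slope u (fun s => -(F (l s)) / (l s) ^ 2) htpos
    (fun s hs => (hud s hs).continuousAt.continuousWithinAt)
    (fun s hs => hud s (Ioo_subset_Icc_self hs))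
  have h2 : C ≤ (u t - u 0) / (t - 0) := by
    rw [← hceq]
    exact hubound c (Ioo_subset_Icc_self hc)
  rw [sub_zero] at h2
  have h3 : C * t ≤ u t - u 0 := (le_div_iff₀ htpos).mp h2
  have h30 : u 0 = l0⁻¹ := by rw [hu]; simp [hinit]
  have h4 : l0⁻¹ + C * t ≤ u t := by rw [← h30]; linarith
  have hsum : 0 < l0⁻¹ + C * t := by positivity
  have h5 : l t ≤ (l0⁻¹ + C * t)⁻¹ := by
    have : u t = (l t)⁻¹ := rfl
    rw [this] at h4
    calc l t = ((l t)⁻¹)⁻¹ := (inv_inv _).symm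
      _ ≤ (l0⁻¹ + C * t)⁻¹ := inv_anti₀ hsum h4
  calc l t ≤ (l0⁻¹ + C * t)⁻¹ := h5
    _ = l0 / (1 + l0 * C * t) := by
        rw [show l0⁻¹ + C * t = (1 + l0 * C * t) / l0 by field_simp, inv_div]
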